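/- For all positive integers s, r with r ≥ s ≥ 2 and r > 2s − 2, the minimum n such that every coloring Δ : [1,n] → ℤ admits a subset S₁ that is zero-sum mod s with |S₁| = s and a subset S₂ that is zero-sum mod r with |S₂| = r, satisfying max(S₁) < min(S₂) and diam(S₁) ≤ diam(S₂), equals 2s + 2r − 2. -/

import Mathlib

open Finset

/-- diameter of a finite set of naturals -/
def diam (S : Finset ℕ) : ℕ := (S.max.getD 0) - (S.min.getD 0)

/-- S is monochromatic under a coloring -/
def Mono {α : Type*} (f : ℕ → α) (S : Finset ℕ) : Prop := ∀ a ∈ S, ∀ b ∈ S, f a = f b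

/-- S is zero-sum mod m under an integer coloring -/
def ZeroSum (f : ℕ → ℤ) (m : ℕ) (S : Finset ℕ) : Prop := (m : ℤ) ∣ ∑ x ∈ S, f x

/-- every element of S colored ∞ (= none) -/
def InftyMono (f : ℕ → Option ℤ) (S : Finset ℕ) : Prop := ∀ x ∈ S, f x = none

/-- S consists of ℤ-colored elements and is zero-sum mod m -/
def ZeroSumOpt (f : ℕ → Option ℤ) (m : ℕ) (S : Finset ℕ) : Prop :=
  (∀ x ∈ S, (f x).isSome) ∧ (m : ℤ) ∣ ∑ x ∈ S, (f x).getD 0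

lemma diam_eq (S : Finset ℕ) (h : S.Nonempty) : diam S = S.max' h - S.min' h := by
  rw [diam, ← Finset.coe_max' h, ← Finset.coe_min' h]; rfl

lemma card_le_diam (S : Finset ℕ) (h : S.Nonempty) : S.card ≤ diam S + 1 := by
  have h1 : S ⊆ Finset.Icc (S.min' h) (S.max' h) := fun x hx =>
    Finset.mem_Icc.2 ⟨S.min'_le x hx, S.le_max' x hx⟩
  have h2 := Finset.card_le_card h1
  rw [Nat.card_Icc] at h2
  have := S.min'_le _ (S.max'_mem h)
  rw [diam_eq S h]; omega

/-- zero-sum sets under the parity coloring are parity-monochromatic -/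
lemma parity_mono (m : ℕ) (hm : 1 ≤ m) (S : Finset ℕ) (hcard : S.card = m)
    (hdvd : (m : ℤ) ∣ ∑ x ∈ S, ((x % 2 : ℕ) : ℤ)) :
    ∀ a ∈ S, ∀ b ∈ S, a % 2 = b % 2 := by
  classical
  set T := S.filter (fun x => x % 2 = 1) with hT
  have hsum : ∑ x ∈ S, ((x % 2 : ℕ) : ℤ) = (T.card : ℤ) := by
    rw [hT, Finset.card_filter, Nat.cast_sum]
    refine Finset.sum_congr rfl fun x _ => ?_
    rcases Nat.mod_two_eq_zero_or_one x with h | h <;> simp [h]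
  rw [hsum, Int.natCast_dvd_natCast] at hdvd
  have hle : T.card ≤ m := hcard ▸ Finset.card_filter_le _ _
  rcases Nat.eq_zero_or_pos T.card with h0 | hpos
  · -- all even
    intro a ha b hb
    have : ∀ x ∈ S, x % 2 = 0 := by
      intro x hx
      rcases Nat.mod_two_eq_zero_or_one x with h | h
      · exact h
      · exfalso
        have : x ∈ T := Finset.mem_filter.2 ⟨hx, h⟩
        rw [Finset.card_eq_zero.1 h0] at this
        simp at this
    rw [this a ha, this b hb]
  · have : m ≤ T.card := Nat.le_of_dvd hpos hdvd
    have hTS : T = S := Finset.eq_of_subset_of_card_le (Finset.filter_subset _ _) (by omega)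
    intro a ha b hb
    rw [← hTS] at ha hb
    have ha' : a % 2 = 1 := (Finset.mem_filter.1 ha).2
    have hb' : b % 2 = 1 := (Finset.mem_filter.1 hb).2
    rw [ha', hb']

theorem stmt2 (s r : ℕ) (hs : 2 ≤ s) (hsr : s ≤ r) (hr : 2 * s - 2 < r) :
    IsLeast {n : ℕ | ∀ Δ : ℕ → ℤ, ∃ S₁ S₂ : Finset ℕ,
    S₁ ⊆ Finset.Icc 1 n ∧ S₂ ⊆ Finset.Icc 1 n ∧
    ZeroSum Δ s S₁ ∧ ZeroSum Δ r S₂ ∧ S₁.card = s ∧ S₂.card = r ∧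
    (∀ a ∈ S₁, ∀ b ∈ S₂, a < b) ∧ diam S₁ ≤ diam S₂} (2 * s + 2 * r - 2) := by
  constructor
  · -- membership
    intro Δ
    obtain ⟨S₁, hS₁sub, hS₁card, hS₁dvd⟩ :=
      Int.erdos_ginzburg_ziv (n := s) (s := Finset.Icc 1 (2 * s - 1)) Δ
        (by rw [Nat.card_Icc]; omega)
    obtain ⟨S₂, hS₂sub, hS₂card, hS₂dvd⟩ :=
      Int.erdos_ginzburg_ziv (n := r) (s := Finset.Icc (2 * s) (2 * s + 2 * r - 2)) Δ
        (by rw [Nat.card_Icc]; omega)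
    have hne₁ : S₁.Nonempty := Finset.card_pos.1 (by omega)
    have hne₂ : S₂.Nonempty := Finset.card_pos.1 (by omega)
    have hb₁ : ∀ x ∈ S₁, 1 ≤ x ∧ x ≤ 2 * s - 1 := fun x hx =>
      Finset.mem_Icc.1 (hS₁sub hx)
    have hb₂ : ∀ x ∈ S₂, 2 * s ≤ x ∧ x ≤ 2 * s + 2 * r - 2 := fun x hx =>
      Finset.mem_Icc.1 (hS₂sub hx)
    refine ⟨S₁, S₂, ?_, ?_, hS₁dvd, hS₂dvd, hS₁card, hS₂card, ?_, ?_⟩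
    · intro x hx; have := hb₁ x hx; exact Finset.mem_Icc.2 ⟨this.1, by omega⟩
    · intro x hx; have := hb₂ x hx; exact Finset.mem_Icc.2 ⟨by omega, by omega⟩
    · intro a ha b hb
      have := hb₁ a ha; have := hb₂ b hb; omega
    · have h1 : diam S₁ ≤ 2 * s - 2 := by
        rw [diam_eq S₁ hne₁]
        have := hb₁ _ (S₁.max'_mem hne₁)
        have := hb₁ _ (S₁.min'_mem hne₁)
        omega
      have h2 : r ≤ diam S₂ + 1 := hS₂card ▸ card_le_diam S₂ hne₂
      omega
  · -- lower bound
    intro n hn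
    by_contra hlt
    push_neg at hlt
    obtain ⟨S₁, S₂, hS₁sub, hS₂sub, hzs₁, hzs₂, hc₁, hc₂, hord, _⟩ :=
      hn (fun i => ((i % 2 : ℕ) : ℤ))
    have hmono₁ := parity_mono s (by omega) S₁ hc₁ hzs₁
    have hmono₂ := parity_mono r (by omega) S₂ hc₂ hzs₂
    -- S₁ has an element ≥ 2s-1
    have hbig : ∃ m ∈ S₁, 2 * s - 1 ≤ m := by
      by_contra hsmall
      push_neg at hsmall
      have hmap : S₁.card ≤ (Finset.Icc 1 (s - 1)).card := by
        apply Finset.card_le_card_of_injOn (fun x => (x + 1) / 2)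
        · intro x hx
          have h1 := (Finset.mem_Icc.1 (hS₁sub hx)).1
          have h2 := hsmall x hx
          exact Finset.mem_Icc.2 ⟨by beta_reduce; omega, by beta_reduce; omega⟩
        · intro x hx y hy hxy
          have := hmono₁ x hx y hy
          simp only at hxy
          omega
      rw [hc₁, Nat.card_Icc] at hmap
      omega
    obtain ⟨m, hm, hm2⟩ := hbig
    -- S₂ ⊆ [2s, 2s+2r-3], fixed parity: at most r-1 elements
    have hmap : S₂.card ≤ (Finset.Icc s (s + r - 2)).card := by
      apply Finset.card_le_card_of_injOn (fun x => x / 2)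
      · intro x hx
        have h1 := hord m hm x hx
        have h2 := (Finset.mem_Icc.1 (hS₂sub hx)).2
        have h3 : x ≤ 2 * s + 2 * r - 3 := by omega
        have h4 : 2 * s ≤ x := by omega
        rcases Nat.mod_two_eq_zero_or_one x with h | h <;>
          exact Finset.mem_Icc.2 ⟨by beta_reduce; omega, by beta_reduce; omega⟩
      · intro x hx y hy hxy
        have := hmono₂ x hx y hy
        simp only at hxy
        omega
    rw [hc₂, Nat.card_Icc] at hmap
    omega
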